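/- arXiv:0804.4106 — 2 statements merged into one kernel-verified Lean document; each statement's English description precedes it below -/
import Mathlib

section
/- Fix 0 < α < 1 and set f_{β,μ}(z) = (1+β) log(z - α) - (1-β) log(1 - αz) - (μ + 1 + β) log z for real β with |β| < 1 and μ = (2α/(1-α²))(α + √(1-β²)). Then the point z_c(β) = (√(1+β) + α√(1-β)) / (√(1-β) + α√(1+β)) satisfies f'_{β,μ}(z_c) = 0 and f''_{β,μ}(z_c) = 0, i.e., z_c is a double critical point of f_{β,μ}. -/
set_option maxHeartbeats 1000000 in
/-- with `f_{β,μ}(z) = (1+β) log(z-α) - (1-β) log(1-αz) - (μ+1+β) log z`,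
`μ = (2α/(1-α²))(α + √(1-β²))`, the point
`z_c(β) = (√(1+β) + α√(1-β)) / (√(1-β) + α√(1+β))` is a double critical point:
`f' (z_c) = 0` and `f'' (z_c) = 0`. -/
theorem double_saddle_point
    (α β : ℝ) (hα : 0 < α) (hα1 : α < 1) (hβ : |β| < 1)
    (μ : ℝ) (hμ : μ = (2 * α / (1 - α ^ 2)) * (α + Real.sqrt (1 - β ^ 2)))
    (f : ℝ → ℝ)
    (hf : ∀ z, f z = (1 + β) * Real.log (z - α) - (1 - β) * Real.log (1 - α * z)
      - (μ + 1 + β) * Real.log z)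
    (zc : ℝ)
    (hzc : zc = (Real.sqrt (1 + β) + α * Real.sqrt (1 - β)) /
      (Real.sqrt (1 - β) + α * Real.sqrt (1 + β))) :
    deriv f zc = 0 ∧ deriv (deriv f) zc = 0 := by
  have hβ1 : -1 < β := neg_lt_of_abs_lt hβ
  have hβ2 : β < 1 := lt_of_abs_lt hβ
  set s := Real.sqrt (1 + β) with hsdef
  set t := Real.sqrt (1 - β) with htdef
  have hs : 0 < s := Real.sqrt_pos.mpr (by linarith)
  have ht : 0 < t := Real.sqrt_pos.mpr (by linarith)
  have hs2 : s ^ 2 = 1 + β := Real.sq_sqrt (by linarith)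
  have ht2 : t ^ 2 = 1 - β := Real.sq_sqrt (by linarith)
  have hst : Real.sqrt (1 - β ^ 2) = s * t := by
    rw [show (1 : ℝ) - β ^ 2 = (1 + β) * (1 - β) by ring,
      Real.sqrt_mul (by linarith)]
  have h1α : (0:ℝ) < 1 - α ^ 2 := by nlinarith
  have hD : 0 < t + α * s := by positivity
  have hN : 0 < s + α * t := by positivity
  have hzcα : zc - α = s * (1 - α ^ 2) / (t + α * s) := by
    rw [hzc]; field_simp; ring
  have h1αzc : 1 - α * zc = t * (1 - α ^ 2) / (t + α * s) := by
    rw [hzc]; field_simp; ring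
  have hzcpos : 0 < zc := by rw [hzc]; positivity
  have hμ1β : μ + 1 + β = (s + α * t) ^ 2 / (1 - α ^ 2) := by
    rw [hμ, hst]
    field_simp
    linear_combination (-1) * hs2 + (-α^2) * ht2
  have hmem : zc ∈ Set.Ioo α (1/α) := by
    constructor
    · nlinarith [div_pos (mul_pos hs h1α) hD, hzcα]
    · rw [lt_div_iff₀ hα]
      nlinarith [div_pos (mul_pos ht h1α) hD, h1αzc]
  have hderiv : ∀ z ∈ Set.Ioo α (1/α),
      HasDerivAt f ((1+β)/(z-α) + (1-β)*α/(1-α*z) - (μ+1+β)/z) z := by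
    intro z hz
    have hz1 : z - α ≠ 0 := by have := hz.1; intro h; nlinarith [sub_eq_zero.mp h]
    have hz2 : 1 - α * z ≠ 0 := by
      have := (lt_div_iff₀ hα).mp hz.2
      intro h; nlinarith [sub_eq_zero.mp h]
    have hz3 : z ≠ 0 := (hα.trans hz.1).ne'
    have h1 : HasDerivAt (fun z => Real.log (z - α)) (1/(z-α)) z := by
      have := ((hasDerivAt_id z).sub_const α).log hz1
      simpa using this
    have h2 : HasDerivAt (fun z => Real.log (1 - α * z)) (-α/(1-α*z)) z := by
      have := (((hasDerivAt_id z).const_mul α).const_sub 1).log hz2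
      simpa using this
    have h3 : HasDerivAt Real.log (1/z) z := by
      simpa using Real.hasDerivAt_log hz3
    have key := ((h1.const_mul (1+β)).sub (h2.const_mul (1-β))).sub (h3.const_mul (μ+1+β))
    have heq : f = fun z => (1 + β) * Real.log (z - α) - (1 - β) * Real.log (1 - α * z)
      - (μ + 1 + β) * Real.log z := funext hf
    rw [heq]
    refine (show HasDerivAt (fun z => (1 + β) * Real.log (z - α) - (1 - β) * Real.log (1 - α * z)
      - (μ + 1 + β) * Real.log z) _ z from key).congr_deriv ?_
    ring
  have hopen : Set.Ioo α (1/α) ∈ nhds zc := isOpen_Ioo.mem_nhds hmem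
  have hfg : deriv f =ᶠ[nhds zc]
      (fun z => (1+β)/(z-α) + (1-β)*α/(1-α*z) - (μ+1+β)/z) :=
    Filter.eventuallyEq_of_mem hopen (fun z hz => (hderiv z hz).deriv)
  have hDne : t + α * s ≠ 0 := hD.ne'
  have hNne : s + α * t ≠ 0 := hN.ne'
  have h1αne : (1:ℝ) - α ^ 2 ≠ 0 := h1α.ne'
  have e1 : zc - α ≠ 0 := by rw [hzcα]; positivity
  have e2 : 1 - α * zc ≠ 0 := by rw [h1αzc]; positivity
  have e3 : zc ≠ 0 := hzcpos.ne'
  have hval1 : (1+β)/(zc-α) + (1-β)*α/(1-α*zc) - (μ+1+β)/zc = 0 := by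
    rw [hzcα, h1αzc, hμ1β, hzc, ← hs2, ← ht2]
    field_simp [hDne, hNne, h1αne, hs.ne', ht.ne']
    ring
  constructor
  · rw [(hderiv zc hmem).deriv]; exact hval1
  · rw [hfg.deriv_eq]
    have H1 : HasDerivAt (fun z : ℝ => z - α) 1 zc := (hasDerivAt_id zc).sub_const α
    have H2 : HasDerivAt (fun z : ℝ => 1 - α * z) (-α) zc := by
      simpa using ((hasDerivAt_id zc).const_mul α).const_sub 1
    have G1 := (hasDerivAt_const zc (1+β)).div H1 e1
    have G2 := (hasDerivAt_const zc ((1-β)*α)).div H2 e2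
    have G3 := (hasDerivAt_const zc (μ+1+β)).div (hasDerivAt_id' zc) e3
    have Hg := (G1.add G2).sub G3
    rw [(show HasDerivAt (fun z => (1+β)/(z-α) + (1-β)*α/(1-α*z) - (μ+1+β)/z) _ zc from Hg).deriv]
    rw [hzcα, h1αzc, hμ1β, hzc, ← hs2, ← ht2]
    field_simp [hDne, hNne, h1αne, hs.ne', ht.ne']
    ring
end

section
/- With f_{β,μ} and z_c(β) as above (μ = (2α/(1-α²))(α + √(1-β²))), the third derivative at the double critical point satisfies f'''_{β,μ}(z_c(β)) = 2D(β)³/z_c(β)³ for some explicit D(β) > 0; in particular at β = 0 one has z_c(0) = 1 and f'''_{0,μ}(1) = 2D³ with D = α^{1/3}(1+α)^{4/3}/(1-α²). -/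
lemma aux_deriv3 (α c1 c2 c3 : ℝ) (hα : 0 < α) (z : ℝ) (hz1 : α < z) (hz2 : z < α⁻¹) :
    iteratedDeriv 3
      (fun w => c1 * Real.log (w - α) - c2 * Real.log (1 - α * w) - c3 * Real.log w) z
      = 2 * c1 / (z - α) ^ 3 + 2 * c2 * α ^ 3 / (1 - α * z) ^ 3 - 2 * c3 / z ^ 3 := by
  set S := Set.Ioo α α⁻¹ with hS
  have hSo : IsOpen S := isOpen_Ioo
  have hzS : z ∈ S := ⟨hz1, hz2⟩
  have facts : ∀ w ∈ S, 0 < w - α ∧ 0 < 1 - α * w ∧ 0 < w := by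
    intro w hw
    refine ⟨sub_pos.mpr hw.1, ?_, hα.trans hw.1⟩
    have h := mul_lt_mul_of_pos_left hw.2 hα
    rw [mul_inv_cancel₀ hα.ne'] at h
    linarith
  have hd1 : ∀ w ∈ S, HasDerivAt
      (fun w => c1 * Real.log (w - α) - c2 * Real.log (1 - α * w) - c3 * Real.log w)
      (c1 / (w - α) + c2 * α / (1 - α * w) - c3 / w) w := by
    intro w hw
    obtain ⟨p1, p2, p3⟩ := facts w hw
    have h1 : HasDerivAt (fun w : ℝ => w - α) 1 w := (hasDerivAt_id w).sub_const α
    have h2 : HasDerivAt (fun w : ℝ => 1 - α * w) (-(α * 1)) w :=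
      ((hasDerivAt_id w).const_mul α).const_sub 1
    have l1 := h1.log p1.ne'
    have l2 := h2.log p2.ne'
    have l3 := (hasDerivAt_id w).log p3.ne'
    have h := ((l1.const_mul c1).sub (l2.const_mul c2)).sub (l3.const_mul c3)
    convert h using 1
    · rfl
    · rfl
    · funext y; simp
    simp only [id_eq]
    field_simp [p1.ne', p2.ne', p3.ne']
    ring
  have hd2 : ∀ w ∈ S, HasDerivAt
      (fun w => c1 / (w - α) + c2 * α / (1 - α * w) - c3 / w)
      (-c1 / (w - α) ^ 2 + c2 * α ^ 2 / (1 - α * w) ^ 2 + c3 / w ^ 2) w := by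
    intro w hw
    obtain ⟨p1, p2, p3⟩ := facts w hw
    have h1 : HasDerivAt (fun w : ℝ => w - α) 1 w := (hasDerivAt_id w).sub_const α
    have h2 : HasDerivAt (fun w : ℝ => 1 - α * w) (-(α * 1)) w :=
      ((hasDerivAt_id w).const_mul α).const_sub 1
    have t1 := (hasDerivAt_const w c1).div h1 p1.ne'
    have t2 := (hasDerivAt_const w (c2 * α)).div h2 p2.ne'
    have t3 := (hasDerivAt_const w c3).div (hasDerivAt_id w) p3.ne'
    have h := (t1.add t2).sub t3
    convert h using 1
    · rfl
    · rfl
    · funext y; simp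
    simp only [id_eq]
    field_simp [p1.ne', p2.ne', p3.ne']
    ring
  have hd3 : ∀ w ∈ S, HasDerivAt
      (fun w => -c1 / (w - α) ^ 2 + c2 * α ^ 2 / (1 - α * w) ^ 2 + c3 / w ^ 2)
      (2 * c1 / (w - α) ^ 3 + 2 * c2 * α ^ 3 / (1 - α * w) ^ 3 - 2 * c3 / w ^ 3) w := by
    intro w hw
    obtain ⟨p1, p2, p3⟩ := facts w hw
    have h1 : HasDerivAt (fun w : ℝ => w - α) 1 w := (hasDerivAt_id w).sub_const α
    have h2 : HasDerivAt (fun w : ℝ => 1 - α * w) (-(α * 1)) w :=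
      ((hasDerivAt_id w).const_mul α).const_sub 1
    have t1 := (hasDerivAt_const w (-c1)).div (h1.pow 2) (pow_ne_zero 2 p1.ne')
    have t2 := (hasDerivAt_const w (c2 * α ^ 2)).div (h2.pow 2) (pow_ne_zero 2 p2.ne')
    have t3 := (hasDerivAt_const w c3).div ((hasDerivAt_id w).pow 2) (pow_ne_zero 2 p3.ne')
    have h := (t1.add t2).add t3
    convert h using 1
    · rfl
    · rfl
    · funext y; simp
    simp
    field_simp [p1.ne', p2.ne', p3.ne']
    ring
  have e3 : ∀ w ∈ S, deriv (deriv
      (fun w => c1 * Real.log (w - α) - c2 * Real.log (1 - α * w) - c3 * Real.log w)) w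
      = -c1 / (w - α) ^ 2 + c2 * α ^ 2 / (1 - α * w) ^ 2 + c3 / w ^ 2 := by
    intro w hw
    have h : deriv (fun w => c1 * Real.log (w - α) - c2 * Real.log (1 - α * w)
        - c3 * Real.log w) =ᶠ[nhds w]
        (fun w => c1 / (w - α) + c2 * α / (1 - α * w) - c3 / w) :=
      Filter.eventuallyEq_of_mem (hSo.mem_nhds hw) (fun u hu => (hd1 u hu).deriv)
    rw [h.deriv_eq, (hd2 w hw).deriv]
  have e4 : deriv (deriv (deriv
      (fun w => c1 * Real.log (w - α) - c2 * Real.log (1 - α * w) - c3 * Real.log w))) z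
      = 2 * c1 / (z - α) ^ 3 + 2 * c2 * α ^ 3 / (1 - α * z) ^ 3 - 2 * c3 / z ^ 3 := by
    have h : deriv (deriv (fun w => c1 * Real.log (w - α) - c2 * Real.log (1 - α * w)
        - c3 * Real.log w)) =ᶠ[nhds z]
        (fun w => -c1 / (w - α) ^ 2 + c2 * α ^ 2 / (1 - α * w) ^ 2 + c3 / w ^ 2) :=
      Filter.eventuallyEq_of_mem (hSo.mem_nhds hzS) (fun u hu => e3 u hu)
    rw [h.deriv_eq, (hd3 z hzS).deriv]
  rw [show (3 : ℕ) = 2 + 1 from rfl, iteratedDeriv_succ,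
    show (2 : ℕ) = 1 + 1 from rfl, iteratedDeriv_succ, iteratedDeriv_one]
  exact e4


set_option maxHeartbeats 2000000 in
/-- with `f_{β,μ}` and the double critical point `z_c(β)` as in the
saddle-point analysis, the third derivative satisfies
`f'''(z_c(β)) = 2 D(β)³ / z_c(β)³` for some `D(β) > 0`; in particular at `β = 0` one has
`z_c(0) = 1` and `f'''(1) = 2D³` with `D = α^{1/3} (1+α)^{4/3} / (1-α²)`. -/
theorem third_derivative_at_double_saddle
    (α : ℝ) (hα : 0 < α) (hα1 : α < 1)
    (μ : ℝ → ℝ) (hμ : ∀ β, μ β = (2 * α / (1 - α ^ 2)) * (α + Real.sqrt (1 - β ^ 2)))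
    (f : ℝ → ℝ → ℝ)
    (hf : ∀ β z, f β z = (1 + β) * Real.log (z - α)
      - (1 - β) * Real.log (1 - α * z) - (μ β + 1 + β) * Real.log z)
    (zc : ℝ → ℝ)
    (hzc : ∀ β, zc β = (Real.sqrt (1 + β) + α * Real.sqrt (1 - β)) /
      (Real.sqrt (1 - β) + α * Real.sqrt (1 + β))) :
    (∀ β : ℝ, |β| < 1 →
      ∃ D : ℝ, 0 < D ∧ iteratedDeriv 3 (f β) (zc β) = 2 * D ^ 3 / (zc β) ^ 3) ∧
    zc 0 = 1 ∧
    iteratedDeriv 3 (f 0) 1 =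
      2 * (α ^ ((1 : ℝ) / 3) * (1 + α) ^ ((4 : ℝ) / 3) / (1 - α ^ 2)) ^ 3 := by
  have h1a2 : 0 < 1 - α ^ 2 := by nlinarith
  have hmain : ∀ β z, α < z → z < α⁻¹ →
      iteratedDeriv 3 (f β) z = 2 * (1 + β) / (z - α) ^ 3
        + 2 * (1 - β) * α ^ 3 / (1 - α * z) ^ 3 - 2 * (μ β + 1 + β) / z ^ 3 := by
    intro β z h1 h2
    have hfun : f β = fun z => (1 + β) * Real.log (z - α)
        - (1 - β) * Real.log (1 - α * z) - (μ β + 1 + β) * Real.log z := funext (hf β)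
    rw [hfun]
    exact aux_deriv3 α (1 + β) (1 - β) (μ β + 1 + β) hα z h1 h2
  have hinv1 : (1 : ℝ) < α⁻¹ := by
    rw [← one_div, lt_div_iff₀ hα]; linarith
  refine ⟨?_, ?_, ?_⟩
  · -- general β
    intro β hβ
    obtain ⟨hbl, hbr⟩ := abs_lt.mp hβ
    have hb1 : (0 : ℝ) < 1 + β := by linarith
    have hb2 : (0 : ℝ) < 1 - β := by linarith
    set s := Real.sqrt (1 + β) with hsdef
    set t := Real.sqrt (1 - β) with htdef
    have hs : 0 < s := Real.sqrt_pos.mpr hb1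
    have ht : 0 < t := Real.sqrt_pos.mpr hb2
    have hs2 : s ^ 2 = 1 + β := Real.sq_sqrt hb1.le
    have ht2 : t ^ 2 = 1 - β := Real.sq_sqrt hb2.le
    have hst : Real.sqrt (1 - β ^ 2) = s * t := by
      rw [show (1 : ℝ) - β ^ 2 = (1 + β) * (1 - β) by ring, Real.sqrt_mul hb1.le]
    have hq : 0 < t + α * s := by positivity
    have hr : 0 < s + α * t := by positivity
    have hzcv : zc β = (s + α * t) / (t + α * s) := hzc β
    have hza : α < zc β := by
      rw [hzcv, lt_div_iff₀ hq]
      nlinarith [mul_pos hs h1a2]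
    have hzb : zc β < α⁻¹ := by
      have h : α * zc β < 1 := by
        rw [hzcv, ← mul_div_assoc, div_lt_one hq]
        nlinarith [mul_pos ht h1a2]
      rw [← one_div, lt_div_iff₀ hα]
      nlinarith
    have hz0 : 0 < zc β := hα.trans hza
    have hG := hmain β (zc β) hza hzb
    have hzma : zc β - α = s * (1 - α ^ 2) / (t + α * s) := by
      rw [hzcv]; field_simp; ring
    have hzmb : 1 - α * zc β = t * (1 - α ^ 2) / (t + α * s) := by
      rw [hzcv]; field_simp; ring
    have hbeta : β = s ^ 2 - 1 := by linarith [hs2]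
    rw [hzma, hzmb, hzcv, hμ β, hst] at hG
    have hsum : s ^ 2 + t ^ 2 = 2 := by rw [hs2, ht2]; ring
    have hQ : (t + α ^ 3 * s) * (s + α * t) ^ 3
        - s * t * (1 - α ^ 2) ^ 2 * (2 * α ^ 2 + 2 * α * (s * t) + s ^ 2 * (1 - α ^ 2))
        = α * (s * t * (1 + α ^ 2) + 2 * α) ^ 2 := by
      linear_combination (3 * α ^ 2 * s * t + 2 * α ^ 3 + α ^ 3 * t ^ 2 + α ^ 3 * s ^ 2
        + α ^ 6 * s * t) * hsum
    have T1 : 2 * (1 + β) / (s * (1 - α ^ 2) / (t + α * s)) ^ 3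
        = 2 * (t + α * s) ^ 3 / (s * (1 - α ^ 2) ^ 3) := by
      rw [← hs2]
      field_simp [hs.ne', h1a2.ne', hq.ne']
    have T2 : 2 * (1 - β) * α ^ 3 / (t * (1 - α ^ 2) / (t + α * s)) ^ 3
        = 2 * α ^ 3 * (t + α * s) ^ 3 / (t * (1 - α ^ 2) ^ 3) := by
      rw [← ht2]
      field_simp [ht.ne', h1a2.ne', hq.ne']
    have T3 : 2 * (2 * α / (1 - α ^ 2) * (α + s * t) + 1 + β)
          / ((s + α * t) / (t + α * s)) ^ 3
        = 2 * (2 * α * (α + s * t) + s ^ 2 * (1 - α ^ 2)) * (t + α * s) ^ 3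
          / ((1 - α ^ 2) * (s + α * t) ^ 3) := by
      rw [hbeta]
      field_simp [h1a2.ne', hq.ne', hr.ne']
      ring
    have expand : iteratedDeriv 3 (f β) (zc β)
        = ((t + α ^ 3 * s) * (s + α * t) ^ 3
            - s * t * (1 - α ^ 2) ^ 2 * (2 * α ^ 2 + 2 * α * (s * t) + s ^ 2 * (1 - α ^ 2)))
          * (2 * (t + α * s) ^ 3) / (s * t * (1 - α ^ 2) ^ 3 * (s + α * t) ^ 3) := by
      rw [hzcv, hG, T1, T2, T3]
      field_simp [hs.ne', ht.ne', h1a2.ne', hq.ne', hr.ne']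
    rw [hQ] at expand
    have h5 : 0 < s * t * (1 + α ^ 2) + 2 * α := by positivity
    have hGpos : 0 < iteratedDeriv 3 (f β) (zc β) := by
      rw [expand]
      apply div_pos
      · exact mul_pos (mul_pos hα (pow_pos h5 2)) (by positivity)
      · positivity
    set x := iteratedDeriv 3 (f β) (zc β) * (zc β) ^ 3 / 2 with hxdef
    have hxpos : 0 < x := div_pos (mul_pos hGpos (pow_pos hz0 3)) two_pos
    refine ⟨x ^ ((1 : ℝ) / 3), Real.rpow_pos_of_pos hxpos _, ?_⟩
    have hD3 : (x ^ ((1 : ℝ) / 3)) ^ (3 : ℕ) = x := by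
      rw [← Real.rpow_natCast (x ^ ((1 : ℝ) / 3)) 3, ← Real.rpow_mul hxpos.le]
      norm_num
    rw [hD3, hxdef]
    field_simp
  · -- zc 0 = 1
    rw [hzc]
    rw [show (1:ℝ) + 0 = 1 by ring, show (1:ℝ) - 0 = 1 by ring, Real.sqrt_one]
    have h1 : (0:ℝ) < 1 + α * 1 := by nlinarith
    rw [div_self h1.ne']

  · -- β = 0 value
    have hv := hmain 0 1 hα1 hinv1
    rw [hv, hμ 0]
    norm_num
    have hA3 : (α ^ ((1 : ℝ) / 3)) ^ (3 : ℕ) = α := by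
      rw [← Real.rpow_natCast (α ^ ((1 : ℝ) / 3)) 3, ← Real.rpow_mul hα.le]
      norm_num
    have hB3 : ((1 + α) ^ ((4 : ℝ) / 3)) ^ (3 : ℕ) = (1 + α) ^ (4 : ℕ) := by
      rw [← Real.rpow_natCast ((1 + α) ^ ((4 : ℝ) / 3)) 3,
        ← Real.rpow_mul (by linarith : (0 : ℝ) ≤ 1 + α)]
      norm_num
    rw [div_pow, mul_pow, hA3, hB3]
    have hne1 : (1 : ℝ) - α ≠ 0 := by linarith
    field_simp
    ring
end
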